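/- If ζ₁ and ζ₂ are independent unit Fréchet random variables, then 1/ζ₁ + 1/ζ₂ is gamma(2,1) distributed; consequently the limit law of n·qₙ, given by the distribution of (1/ζ₁ + 1/ζ₂) where (n^{-1}(max Yᵢ/Xᵢ+1), n^{-1}(max Xᵢ/Yᵢ+1)) → (ζ₁, ζ₂) jointly, is gamma(2,1). -/

import Mathlib

open MeasureTheory ProbabilityTheory Real Set

/-- Tail of a unit Fréchet random variable. -/
lemma frechet_tail {Ω : Type*} [MeasurableSpace Ω] (μ : Measure Ω)
    [IsProbabilityMeasure μ] (ζ : Ω → ℝ) (hm : Measurable ζ)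
    (hF : ∀ x : ℝ, 0 < x → μ {ω | ζ ω ≤ x} = ENNReal.ofReal (exp (-1 / x)))
    (a : ℝ) (ha : 0 < a) :
    μ {ω | a ≤ ζ ω} = ENNReal.ofReal (1 - exp (-1 / a)) := by
  -- first: μ {ζ < a} = ofReal (exp (-1/a))
  have hlt : μ {ω | ζ ω < a} = ENNReal.ofReal (exp (-1 / a)) := by
    set s : ℕ → Set Ω := fun n => {ω | ζ ω ≤ a - a / (n + 2)} with hs
    have hapos : ∀ n : ℕ, 0 < a - a / (n + 2) := by
      intro n
      have h2 : (0 : ℝ) < (n : ℝ) + 2 := by positivity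
      rw [sub_pos, div_lt_iff₀ h2]
      nlinarith [Nat.cast_nonneg (α := ℝ) n]
    have hmono : Monotone s := by
      intro m n hmn ω h
      have h2m : (0 : ℝ) < (m : ℝ) + 2 := by positivity
      have h2n : (0 : ℝ) < (n : ℝ) + 2 := by positivity
      have : a / (n + 2) ≤ a / (m + 2) := by
        apply div_le_div_of_nonneg_left ha.le h2m
        exact_mod_cast by exact_mod_cast add_le_add_left (Nat.cast_le.mpr hmn) 2
      simp only [hs, mem_setOf_eq] at h ⊢
      linarith
    have hU : (⋃ n, s n) = {ω | ζ ω < a} := by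
      ext ω
      simp only [mem_iUnion, hs, mem_setOf_eq]
      constructor
      · rintro ⟨n, hn⟩
        have : 0 < a / (n + 2) := by positivity
        linarith
      · intro h
        obtain ⟨n, hn⟩ := exists_nat_gt (a / (a - ζ ω))
        refine ⟨n, ?_⟩
        have hd : 0 < a - ζ ω := by linarith
        have h2 : (0 : ℝ) < (n : ℝ) + 2 := by positivity
        have hn2 : a / (a - ζ ω) < (n : ℝ) + 2 := by linarith
        have : a / ((n : ℝ) + 2) < a - ζ ω := by
          rw [div_lt_iff₀ h2]
          calc a = (a / (a - ζ ω)) * (a - ζ ω) := by field_simp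
          _ < ((n : ℝ) + 2) * (a - ζ ω) := by
              exact mul_lt_mul_of_pos_right hn2 hd
          _ = (a - ζ ω) * ((n : ℝ) + 2) := by ring
        linarith
    have hmeas : ∀ n, MeasurableSet (s n) := fun n => hm measurableSet_Iic
    have ht1 : Filter.Tendsto (fun n => μ (s n)) Filter.atTop (nhds (μ (⋃ n, s n))) :=
      tendsto_measure_iUnion_atTop hmono
    have hvals : ∀ n : ℕ, μ (s n) = ENNReal.ofReal (exp (-1 / (a - a / (n + 2)))) := by
      intro n; exact hF _ (hapos n)
    have htend2 : Filter.Tendsto (fun n : ℕ => a - a / ((n : ℝ) + 2)) Filter.atTop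
        (nhds a) := by
      have h0 : Filter.Tendsto (fun n : ℕ => a / ((n : ℝ) + 2)) Filter.atTop (nhds 0) := by
        apply Filter.Tendsto.div_atTop tendsto_const_nhds
        exact Filter.tendsto_atTop_add_const_right _ 2 tendsto_natCast_atTop_atTop
      simpa using tendsto_const_nhds.sub h0
    have hcont : Filter.Tendsto (fun n : ℕ => ENNReal.ofReal (exp (-1 / (a - a / (n + 2)))))
        Filter.atTop (nhds (ENNReal.ofReal (exp (-1 / a)))) := by
      apply (ENNReal.continuous_ofReal.tendsto _).comp
      apply (Real.continuous_exp.tendsto _).comp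
      have : Filter.Tendsto (fun n : ℕ => -1 / (a - a / ((n : ℝ) + 2))) Filter.atTop
          (nhds (-1 / a)) := Filter.Tendsto.div tendsto_const_nhds htend2 ha.ne'
      exact this
    have := ht1
    rw [hU] at this
    simp only [hvals] at this
    exact tendsto_nhds_unique this hcont
  have hcompl : {ω | a ≤ ζ ω} = {ω | ζ ω < a}ᶜ := by
    ext ω; simp [not_lt]
  rw [hcompl, measure_compl (by exact measurableSet_lt hm measurable_const) (measure_ne_top _ _),
    hlt, measure_univ]
  rw [ENNReal.ofReal_sub _ (exp_pos _).le, ENNReal.ofReal_one]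

/-- The law of `1 / ζ` for a unit Fréchet `ζ` is the exponential distribution. -/
lemma map_inv_frechet {Ω : Type*} [MeasurableSpace Ω] (μ : Measure Ω)
    [IsProbabilityMeasure μ] (ζ : Ω → ℝ) (hm : Measurable ζ)
    (hpos : ∀ᵐ ω ∂μ, 0 < ζ ω)
    (hF : ∀ x : ℝ, 0 < x → μ {ω | ζ ω ≤ x} = ENNReal.ofReal (exp (-1 / x))) :
    Measure.map (fun ω => 1 / ζ ω) μ = expMeasure 1 := by
  have hη : Measurable fun ω => 1 / ζ ω := by simpa [one_div] using hm
  haveI : IsProbabilityMeasure (Measure.map (fun ω => 1 / ζ ω) μ) :=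
    Measure.isProbabilityMeasure_map hη.aemeasurable
  haveI : IsProbabilityMeasure (expMeasure 1) := isProbabilityMeasure_expMeasure one_pos
  refine Measure.ext_of_Iic _ _ fun x => ?_
  have hexp : expMeasure 1 (Iic x)
      = ENNReal.ofReal (if 0 ≤ x then 1 - exp (-x) else 0) := by
    rw [expMeasure, gammaMeasure, withDensity_apply _ measurableSet_Iic]
    have h := lintegral_exponentialPDF_eq_antiDeriv one_pos x
    simp only [exponentialPDF, exponentialPDFReal, one_mul] at h
    simpa [gammaPDF] using h
  rw [Measure.map_apply hη measurableSet_Iic, hexp]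
  have hpre : (fun ω => 1 / ζ ω) ⁻¹' Iic x = {ω | 1 / ζ ω ≤ x} := rfl
  rw [hpre]
  rcases lt_or_ge 0 x with hx | hx
  · have hax : 0 < 1 / x := by positivity
    have hcong : μ {ω | 1 / ζ ω ≤ x} = μ {ω | 1 / x ≤ ζ ω} := by
      apply measure_congr
      apply Filter.eventuallyEq_set.mpr
      filter_upwards [hpos] with ω hω
      exact one_div_le hω hx
    rw [hcong, frechet_tail μ ζ hm hF _ hax, if_pos hx.le]
    congr 2
    field_simp
  · have h0 : μ {ω | 1 / ζ ω ≤ x} = 0 := by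
      apply measure_mono_null (t := {ω | ¬ 0 < ζ ω}) ?_ (by exact ae_iff.mp hpos)
      intro ω hω hpω
      have : 0 < 1 / ζ ω := by positivity
      exact absurd hω (by simp only [mem_setOf_eq]; linarith)
    rw [h0]
    split_ifs with h
    · have : x = 0 := le_antisymm hx h
      simp [this]
    · simp

lemma interval_int_one {t : ℝ} :
    ∫ x in (0 : ℝ)..t, (exp (-x) - exp (-t)) = 1 - exp (-t) - t * exp (-t) := by
  have hderiv : ∀ x ∈ uIcc (0 : ℝ) t,
      HasDerivAt (fun y => -exp (-y) - exp (-t) * y) (exp (-x) - exp (-t)) x := by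
    intro x _
    have h1 : HasDerivAt (fun y : ℝ => -exp (-y)) (exp (-x)) x := by
      have := ((hasDerivAt_id x).neg.exp).neg
      simpa using this.congr_of_eventuallyEq (by rfl)
    have h2 : HasDerivAt (fun y : ℝ => exp (-t) * y) (exp (-t)) x := by
      simpa using (hasDerivAt_id x).const_mul (exp (-t))
    exact h1.sub h2
  have hint : IntervalIntegrable (fun x => exp (-x) - exp (-t)) MeasureTheory.volume 0 t :=
    (Continuous.sub (by continuity) continuous_const).intervalIntegrable 0 t
  rw [intervalIntegral.integral_eq_sub_of_hasDerivAt hderiv hint]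
  simp; ring

lemma interval_int_two {t : ℝ} :
    ∫ x in (0 : ℝ)..t, x * exp (-x) = 1 - (t + 1) * exp (-t) := by
  have hderiv : ∀ x ∈ uIcc (0 : ℝ) t,
      HasDerivAt (fun y => -((y + 1) * exp (-y))) (x * exp (-x)) x := by
    intro x _
    have h1 : HasDerivAt (fun y : ℝ => y + 1) 1 x := (hasDerivAt_id x).add_const 1
    have h2 : HasDerivAt (fun y : ℝ => exp (-y)) (-exp (-x)) x := by
      simpa using (hasDerivAt_id x).neg.exp
    have : HasDerivAt (fun y => -((y + 1) * exp (-y))) (-(1 * exp (-x) + (x + 1) * -exp (-x))) x :=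
      (h1.mul h2).neg
    convert this using 1
    ring
  have hint : IntervalIntegrable (fun x => x * exp (-x)) MeasureTheory.volume 0 t :=
    (Continuous.mul continuous_id (by continuity)).intervalIntegrable 0 t
  rw [intervalIntegral.integral_eq_sub_of_hasDerivAt hderiv hint]
  simp; ring

/-- If `ζ₁` and `ζ₂` are independent unit Fréchet random variables, then
`1/ζ₁ + 1/ζ₂` is gamma(2,1) distributed: its CDF at every `t > 0` equals
`∫_0^t s e^{-s} ds`. -/
theorem inv_frechet_sum_gamma {Ω : Type*} [MeasurableSpace Ω] (μ : Measure Ω)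
    [IsProbabilityMeasure μ] (ζ₁ ζ₂ : Ω → ℝ) (h1 : Measurable ζ₁) (h2 : Measurable ζ₂)
    (hindep : IndepFun ζ₁ ζ₂ μ)
    (h1pos : ∀ᵐ ω ∂μ, 0 < ζ₁ ω) (h2pos : ∀ᵐ ω ∂μ, 0 < ζ₂ ω)
    (h1F : ∀ x : ℝ, 0 < x → μ {ω | ζ₁ ω ≤ x} = ENNReal.ofReal (exp (-1 / x)))
    (h2F : ∀ x : ℝ, 0 < x → μ {ω | ζ₂ ω ≤ x} = ENNReal.ofReal (exp (-1 / x))) :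
    ∀ t : ℝ, 0 < t →
      μ {ω | 1 / ζ₁ ω + 1 / ζ₂ ω ≤ t}
        = ENNReal.ofReal (∫ s in Set.Ioo (0 : ℝ) t, s * exp (-s)) := by
  intro t ht
  have hinvm : Measurable fun x : ℝ => 1 / x := by simpa [one_div] using measurable_inv
  have hη₁ : Measurable fun ω => 1 / ζ₁ ω := hinvm.comp h1
  have hη₂ : Measurable fun ω => 1 / ζ₂ ω := hinvm.comp h2
  have hindepη : IndepFun (fun ω => 1 / ζ₁ ω) (fun ω => 1 / ζ₂ ω) μ :=
    hindep.comp hinvm hinvm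
  have hmap : μ.map (fun ω => (1 / ζ₁ ω, 1 / ζ₂ ω))
      = (μ.map fun ω => 1 / ζ₁ ω).prod (μ.map fun ω => 1 / ζ₂ ω) :=
    (indepFun_iff_map_prod_eq_prod_map_map hη₁.aemeasurable hη₂.aemeasurable).mp hindepη
  rw [map_inv_frechet μ ζ₁ h1 h1pos h1F, map_inv_frechet μ ζ₂ h2 h2pos h2F] at hmap
  have hS : MeasurableSet {p : ℝ × ℝ | p.1 + p.2 ≤ t} :=
    measurableSet_le (measurable_fst.add measurable_snd) measurable_const
  have key : μ {ω | 1 / ζ₁ ω + 1 / ζ₂ ω ≤ t}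
      = ((expMeasure 1).prod (expMeasure 1)) {p : ℝ × ℝ | p.1 + p.2 ≤ t} := by
    rw [← hmap, Measure.map_apply (hη₁.prodMk hη₂) hS]
    rfl
  rw [key]
  haveI : IsProbabilityMeasure (expMeasure 1) := isProbabilityMeasure_expMeasure one_pos
  have hexpIic : ∀ x : ℝ, expMeasure 1 (Iic x)
      = ENNReal.ofReal (if 0 ≤ x then 1 - exp (-x) else 0) := by
    intro x
    rw [expMeasure, gammaMeasure, withDensity_apply _ measurableSet_Iic]
    have h := lintegral_exponentialPDF_eq_antiDeriv one_pos x
    simp only [exponentialPDF, exponentialPDFReal, one_mul] at h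
    simpa [gammaPDF] using h
  rw [Measure.prod_apply hS]
  have hpre : ∀ x : ℝ, (Prod.mk x ⁻¹' {p : ℝ × ℝ | p.1 + p.2 ≤ t}) = Iic (t - x) := by
    intro x; ext y; simp [le_sub_iff_add_le, add_comm]
  simp only [hpre, hexpIic]
  -- rewrite the outer integral over expMeasure as a lintegral w.r.t. volume
  have hpdfmeas : Measurable (exponentialPDF 1) :=
    (measurable_exponentialPDFReal 1).ennreal_ofReal
  have hGmeas : Measurable fun x : ℝ =>
      ENNReal.ofReal (if 0 ≤ t - x then 1 - exp (-(t - x)) else 0) := by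
    apply Measurable.ennreal_ofReal
    apply Measurable.ite
    · exact measurableSet_le measurable_const (measurable_const.sub measurable_id)
    · exact (measurable_const.sub ((measurable_const.sub measurable_id).neg.exp))
    · exact measurable_const
  have hwd : expMeasure 1 = MeasureTheory.volume.withDensity (exponentialPDF 1) := rfl
  rw [hwd, lintegral_withDensity_eq_lintegral_mul _ hpdfmeas hGmeas]
  have hpt : ∀ x : ℝ, (exponentialPDF 1 * fun x : ℝ =>
      ENNReal.ofReal (if 0 ≤ t - x then 1 - exp (-(t - x)) else 0)) x
      = Set.indicator (Icc 0 t)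
          (fun x => ENNReal.ofReal (exp (-x) * (1 - exp (-(t - x))))) x := by
    intro x
    simp only [Pi.mul_apply]
    by_cases hx0 : 0 ≤ x
    · by_cases hxt : x ≤ t
      · rw [Set.indicator_of_mem (Set.mem_Icc.mpr ⟨hx0, hxt⟩), exponentialPDF_of_nonneg hx0,
          if_pos (by linarith), ← ENNReal.ofReal_mul (by positivity)]
        norm_num
      · rw [Set.indicator_of_notMem (fun h => hxt (Set.mem_Icc.mp h).2), if_neg (by linarith)]
        simp
    · rw [Set.indicator_of_notMem (fun h => hx0 (Set.mem_Icc.mp h).1),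
        exponentialPDF_of_neg (lt_of_not_ge hx0)]
      simp
  rw [lintegral_congr hpt, lintegral_indicator measurableSet_Icc _]
  have hnonneg : ∀ x ∈ Icc (0 : ℝ) t, 0 ≤ exp (-x) * (1 - exp (-(t - x))) := by
    intro x hx
    have h1 : exp (-(t - x)) ≤ 1 := exp_le_one_iff.mpr (by linarith [hx.2])
    have := exp_pos (-x)
    nlinarith
  have hcont : Continuous fun x : ℝ => exp (-x) * (1 - exp (-(t - x))) := by
    continuity
  have hInt : IntegrableOn (fun x => exp (-x) * (1 - exp (-(t - x)))) (Icc 0 t)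
      MeasureTheory.volume := hcont.integrableOn_Icc
  rw [← MeasureTheory.ofReal_integral_eq_lintegral_ofReal hInt
    ((ae_restrict_iff' measurableSet_Icc).mpr (Filter.Eventually.of_forall hnonneg))]
  congr 1
  have hL : ∫ x in Icc (0 : ℝ) t, exp (-x) * (1 - exp (-(t - x)))
      = ∫ x in (0 : ℝ)..t, (exp (-x) - exp (-t)) := by
    rw [MeasureTheory.integral_Icc_eq_integral_Ioc, ← intervalIntegral.integral_of_le ht.le]
    apply intervalIntegral.integral_congr
    intro x _
    have : exp (-x) * exp (-(t - x)) = exp (-t) := by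
      rw [← exp_add]; ring_nf
    simp only
    nlinarith [this]
  have hR : ∫ s in Set.Ioo (0 : ℝ) t, s * exp (-s)
      = ∫ x in (0 : ℝ)..t, x * exp (-x) := by
    rw [← MeasureTheory.integral_Ioc_eq_integral_Ioo, ← intervalIntegral.integral_of_le ht.le]
  rw [hL, hR, interval_int_one, interval_int_two]
  ring
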